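/- For n ≥ 2, let B_n^+ (resp. B_n^-) be the signed permutations of [n] with even (resp. odd) type-B length inv_B. The polynomials B_n^±(s,t) = Σ_{π ∈ B_n^±} t^{des_B(π)} s^{asc_B(π)} satisfy B_n^+(s,t) = s·B_{n-1}^+(s,t) + t·B_{n-1}^-(s,t) + st·(∂/∂s + ∂/∂t) B_{n-1}(s,t), and the analogous recurrence with + and - exchanged. -/

import Mathlib

open Finset

/-- number of descents of a permutation of `Fin n` (one-line notation). -/
def desA {n : ℕ} (π : Equiv.Perm (Fin n)) : ℕ :=
  (Finset.univ.filter (fun i : Fin (n-1) =>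
    π ⟨i.1+1, by have := i.2; omega⟩ < π ⟨i.1, by have := i.2; omega⟩)).card

/-- number of ascents. -/
def ascA {n : ℕ} (π : Equiv.Perm (Fin n)) : ℕ :=
  (Finset.univ.filter (fun i : Fin (n-1) =>
    π ⟨i.1, by have := i.2; omega⟩ < π ⟨i.1+1, by have := i.2; omega⟩)).card

/-- number of inversions. -/
def invA {n : ℕ} (π : Equiv.Perm (Fin n)) : ℕ :=
  (Finset.univ.filter (fun p : Fin n × Fin n => p.1 < p.2 ∧ π p.2 < π p.1)).card

/-- bivariate Eulerian polynomial over all of `S_n`; variable 0 is `s`, variable 1 is `t`. -/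
noncomputable def Abiv (n : ℕ) : MvPolynomial (Fin 2) ℚ :=
  ∑ π : Equiv.Perm (Fin n), MvPolynomial.X 1 ^ desA π * MvPolynomial.X 0 ^ ascA π

noncomputable def AbivP (n : ℕ) : MvPolynomial (Fin 2) ℚ :=
  ∑ π ∈ Finset.univ.filter (fun π : Equiv.Perm (Fin n) => Equiv.Perm.sign π = 1),
    MvPolynomial.X 1 ^ desA π * MvPolynomial.X 0 ^ ascA π

noncomputable def AbivM (n : ℕ) : MvPolynomial (Fin 2) ℚ :=
  ∑ π ∈ Finset.univ.filter (fun π : Equiv.Perm (Fin n) => Equiv.Perm.sign π = -1),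
    MvPolynomial.X 1 ^ desA π * MvPolynomial.X 0 ^ ascA π

noncomputable def Auni (n : ℕ) : Polynomial ℚ :=
  ∑ π : Equiv.Perm (Fin n), Polynomial.X ^ desA π

noncomputable def AuniP (n : ℕ) : Polynomial ℚ :=
  ∑ π ∈ Finset.univ.filter (fun π : Equiv.Perm (Fin n) => Equiv.Perm.sign π = 1),
    Polynomial.X ^ desA π

noncomputable def AuniM (n : ℕ) : Polynomial ℚ :=
  ∑ π ∈ Finset.univ.filter (fun π : Equiv.Perm (Fin n) => Equiv.Perm.sign π = -1),
    Polynomial.X ^ desA π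

/-- the operator `∂/∂s + ∂/∂t`. -/
noncomputable def Dop (f : MvPolynomial (Fin 2) ℚ) : MvPolynomial (Fin 2) ℚ :=
  MvPolynomial.pderiv 0 f + MvPolynomial.pderiv 1 f

/-- A univariate polynomial is palindromic: with `r` the least exponent with nonzero
coefficient and `n` the degree, `a_{r+i} = a_{n-i}`. -/
def Palind (f : Polynomial ℚ) : Prop :=
  ∀ i ≤ f.natDegree - f.natTrailingDegree,
    f.coeff (f.natTrailingDegree + i) = f.coeff (f.natDegree - i)

/-- bivariate gamma positivity with center of symmetry `N/2`. -/
def BivGamma (f : MvPolynomial (Fin 2) ℚ) (N : ℕ) : Prop :=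
  ∃ γ : ℕ → ℕ, (∀ i, γ i ≠ 0 → 2*i ≤ N) ∧
    f = ∑ i ∈ Finset.range (N+1), (γ i : MvPolynomial (Fin 2) ℚ) *
      ((MvPolynomial.X 0 * MvPolynomial.X 1)^i * (MvPolynomial.X 0 + MvPolynomial.X 1)^(N - 2*i))

/-- univariate gamma positivity with center of symmetry `c2/2`. -/
def UniGamma (f : Polynomial ℚ) (c2 : ℕ) : Prop :=
  ∃ γ : ℕ → ℕ, (∀ i, γ i ≠ 0 → 2*i ≤ c2) ∧
    f = ∑ i ∈ Finset.range (c2+1), (γ i : ℚ) •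
      (Polynomial.X^i * (1 + Polynomial.X)^(c2 - 2*i))

/-- signed permutations: a permutation together with a sign for each position. -/
abbrev SignedPerm (n : ℕ) := Equiv.Perm (Fin n) × (Fin n → Bool)

/-- the one-line word of a signed permutation, 1-indexed, with `bw w 0 = 0`;
entry `i` is `±(w.1 i + 1)` viewed in `{-n,…,-1,1,…,n}`. -/
def bw {n : ℕ} (w : SignedPerm n) (i : ℕ) : ℤ :=
  if h : 1 ≤ i ∧ i ≤ n then
    (if w.2 ⟨i-1, by omega⟩ then -(((w.1 ⟨i-1, by omega⟩ : ℕ) : ℤ) + 1)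
     else ((w.1 ⟨i-1, by omega⟩ : ℕ) : ℤ) + 1)
  else 0

/-- type-B descents (including a possible descent at position 0). -/
def desB {n : ℕ} (w : SignedPerm n) : ℕ :=
  ((Finset.range n).filter (fun i => bw w (i+1) < bw w i)).card

/-- type-B inversions (length). -/
def invB {n : ℕ} (w : SignedPerm n) : ℕ :=
  (Finset.univ.filter (fun p : Fin n × Fin n => p.1 < p.2 ∧ bw w (p.2.1+1) < bw w (p.1.1+1))).card
  + (Finset.univ.filter (fun p : Fin n × Fin n => p.1 < p.2 ∧ bw w (p.2.1+1) < -(bw w (p.1.1+1)))).card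
  + (Finset.univ.filter (fun i : Fin n => bw w (i.1+1) < 0)).card

/-- type-D inversions. -/
def invD {n : ℕ} (w : SignedPerm n) : ℕ :=
  (Finset.univ.filter (fun p : Fin n × Fin n => p.1 < p.2 ∧ bw w (p.2.1+1) < bw w (p.1.1+1))).card
  + (Finset.univ.filter (fun p : Fin n × Fin n => p.1 < p.2 ∧ bw w (p.2.1+1) < -(bw w (p.1.1+1)))).card

noncomputable def Bbiv (n : ℕ) : MvPolynomial (Fin 2) ℚ :=
  ∑ w : SignedPerm n, MvPolynomial.X 1 ^ desB w * MvPolynomial.X 0 ^ (n - desB w)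

noncomputable def BbivP (n : ℕ) : MvPolynomial (Fin 2) ℚ :=
  ∑ w ∈ Finset.univ.filter (fun w : SignedPerm n => Even (invB w)),
    MvPolynomial.X 1 ^ desB w * MvPolynomial.X 0 ^ (n - desB w)

noncomputable def BbivM (n : ℕ) : MvPolynomial (Fin 2) ℚ :=
  ∑ w ∈ Finset.univ.filter (fun w : SignedPerm n => ¬ Even (invB w)),
    MvPolynomial.X 1 ^ desB w * MvPolynomial.X 0 ^ (n - desB w)

noncomputable def BuniP (n : ℕ) : Polynomial ℚ :=
  ∑ w ∈ Finset.univ.filter (fun w : SignedPerm n => Even (invB w)), Polynomial.X ^ desB w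

noncomputable def BuniM (n : ℕ) : Polynomial ℚ :=
  ∑ w ∈ Finset.univ.filter (fun w : SignedPerm n => ¬ Even (invB w)), Polynomial.X ^ desB w

/-- deleting the largest letter from the one-line notation of `π ∈ S_{n+1}`
gives a permutation of `[n]`. -/
noncomputable def restrictMax {n : ℕ} (π : Equiv.Perm (Fin (n+1))) : Equiv.Perm (Fin n) :=
  Equiv.ofBijective
    (fun i => Fin.castPred (π ((π.symm (Fin.last n)).succAbove i))
      (by
        intro h
        have h2 : (π.symm (Fin.last n)).succAbove i = π.symm (Fin.last n) := by
          apply π.injective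
          rw [h, Equiv.apply_symm_apply]
        exact Fin.succAbove_ne _ i h2))
    (Finite.injective_iff_bijective.mp (by
      intro i j h
      have h2 : π ((π.symm (Fin.last n)).succAbove i) = π ((π.symm (Fin.last n)).succAbove j) :=
        Fin.castPred_inj.mp h
      have h3 := π.injective h2
      exact Fin.succAbove_right_injective h3))

/-- number of even permutations of `[n]` with `k` descents (`k : ℤ`). -/
noncomputable def aP (n : ℕ) (k : ℤ) : ℕ :=
  (Finset.univ.filter (fun π : Equiv.Perm (Fin n) =>
    Equiv.Perm.sign π = 1 ∧ (desA π : ℤ) = k)).card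

/-- number of odd permutations of `[n]` with `k` descents. -/
noncomputable def aM (n : ℕ) (k : ℤ) : ℕ :=
  (Finset.univ.filter (fun π : Equiv.Perm (Fin n) =>
    Equiv.Perm.sign π = -1 ∧ (desA π : ℤ) = k)).card

/-! ### Auxiliary development: insertion of the largest letter -/

section InsertionAux

open Finset MvPolynomial

variable {m : ℕ}

/-- insert value `last m` at position `k` (function form). -/
def insF (v : Equiv.Perm (Fin m)) (k : Fin (m+1)) (i : Fin (m+1)) : Fin (m+1) :=
  if h1 : i.1 = k.1 then Fin.last m
  else if h2 : i.1 < k.1 then (v ⟨i.1, by have := k.2; omega⟩).castSucc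
  else (v ⟨i.1 - 1, by have := i.2; omega⟩).castSucc

lemma insF_inj (v : Equiv.Perm (Fin m)) (k : Fin (m+1)) : Function.Injective (insF v k) := by
  intro a b h
  unfold insF at h
  split_ifs at h with h1 h2 h3 h3 h4 h5 h5 h6 <;>
    first
    | (exact Fin.ext (by omega))
    | (exact absurd h (by simp [Fin.ext_iff]; omega))
    | (exact absurd h.symm (Fin.ne_of_lt (Fin.castSucc_lt_last _)))
    | (exact absurd h (Fin.ne_of_lt (Fin.castSucc_lt_last _)))
    | (have := v.injective (Fin.castSucc_injective _ h); simp [Fin.ext_iff] at this; exact Fin.ext (by omega))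

/-- insert value `last m` at position `k` (permutation form). -/
noncomputable def insP (v : Equiv.Perm (Fin m)) (k : Fin (m+1)) : Equiv.Perm (Fin (m+1)) :=
  Equiv.ofBijective (insF v k) ((Finite.injective_iff_bijective).1 (insF_inj v k))

/-- insert sign `ε` at position `k`. -/
def insS (c : Fin m → Bool) (k : Fin (m+1)) (ε : Bool) (i : Fin (m+1)) : Bool :=
  if h1 : i.1 = k.1 then ε
  else if h2 : i.1 < k.1 then c ⟨i.1, by have := k.2; omega⟩
  else c ⟨i.1 - 1, by have := i.2; omega⟩

/-- insertion map on signed permutations. -/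
noncomputable def insW (v : SignedPerm m) (k : Fin (m+1)) (ε : Bool) : SignedPerm (m+1) :=
  (insP v.1 k, insS v.2 k ε)

/-- the new letter. -/
def nuv (m : ℕ) (ε : Bool) : ℤ := if ε then -((m : ℤ)+1) else (m : ℤ)+1

lemma bw_zero (w : SignedPerm m) : bw w 0 = 0 := by simp [bw]

lemma bw_bounds (w : SignedPerm m) (i : ℕ) : -(m:ℤ) ≤ bw w i ∧ bw w i ≤ m := by
  rw [bw]
  split_ifs with h hb
  · have h2 := (w.1 ⟨i-1, by omega⟩).2
    constructor <;> [skip; nlinarith [h2]]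
    have : ((w.1 ⟨i-1, by omega⟩ : Fin m) : ℤ) + 1 ≤ m := by exact_mod_cast h2
    linarith
  · have h2 := (w.1 ⟨i-1, by omega⟩).2
    constructor
    · have : (0:ℤ) ≤ ((w.1 ⟨i-1, by omega⟩ : Fin m) : ℕ) := by positivity
      have hm : (1:ℤ) ≤ m := by exact_mod_cast Nat.one_le_iff_ne_zero.2 (by omega)
      linarith
    · have : ((w.1 ⟨i-1, by omega⟩ : Fin m) : ℤ) + 1 ≤ m := by exact_mod_cast h2
      linarith
  · constructor <;> simp

lemma sA_val (k : Fin (m+1)) (j : Fin m) :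
    (k.succAbove j).1 = if j.1 < k.1 then j.1 else j.1 + 1 := by
  rw [Fin.succAbove]
  rcases lt_or_ge (j.1 : ℕ) k.1 with h | h
  · rw [if_pos (by simpa [Fin.lt_def] using h), if_pos h]; rfl
  · rw [if_neg (by simpa [Fin.lt_def] using not_lt.2 h), if_neg (not_lt.2 h)]; rfl

lemma bw_insW (v : SignedPerm m) (k : Fin (m+1)) (ε : Bool) (i : ℕ) (hi : i ≤ m+1) :
    bw (insW v k ε) i =
      if i = k.1 + 1 then nuv m ε else if i < k.1 + 1 then bw v i else bw v (i-1) := by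
  have hk := k.2
  rcases Nat.eq_zero_or_pos i with rfl | hpos
  · rw [bw_zero, if_neg (by omega), if_pos (by omega), bw_zero]
  rw [bw, dif_pos ⟨hpos, hi⟩]
  have hPS : ∀ x, (insW v k ε).1 x = insF v.1 k x ∧ (insW v k ε).2 x = insS v.2 k ε x :=
    fun _ => ⟨rfl, rfl⟩
  rw [(hPS _).1, (hPS _).2]
  simp only [insF, insS, Fin.val_mk]
  rcases lt_trichotomy (i-1) k.1 with hc | hc | hc
  · conv_lhs => rw [dif_neg (show ¬ i-1 = k.1 by omega), dif_pos hc,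
      dif_neg (show ¬ i-1 = k.1 by omega), dif_pos hc]
    conv_rhs => rw [if_neg (show ¬ i = k.1+1 by omega), if_pos (show i < k.1+1 by omega),
      bw, dif_pos (show 1 ≤ i ∧ i ≤ m from ⟨by omega, by omega⟩)]
    simp [Fin.coe_castSucc]
  · conv_lhs => rw [dif_pos hc, dif_pos hc]
    conv_rhs => rw [if_pos (show i = k.1+1 by omega)]
    cases ε <;> simp [nuv, Fin.val_last]
  · conv_lhs => rw [dif_neg (show ¬ i-1 = k.1 by omega), dif_neg (show ¬ i-1 < k.1 by omega),
      dif_neg (show ¬ i-1 = k.1 by omega), dif_neg (show ¬ i-1 < k.1 by omega)]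
    conv_rhs => rw [if_neg (show ¬ i = k.1+1 by omega), if_neg (show ¬ i < k.1+1 by omega),
      bw, dif_pos (show 1 ≤ i-1 ∧ i-1 ≤ m from ⟨by omega, by omega⟩)]
    simp [Fin.coe_castSucc]


lemma bw_insW_self (v : SignedPerm m) (k : Fin (m+1)) (ε : Bool) :
    bw (insW v k ε) (k.1+1) = nuv m ε := by
  rw [bw_insW v k ε _ (by have := k.2; omega), if_pos rfl]

lemma bw_insW_lt (v : SignedPerm m) (k : Fin (m+1)) (ε : Bool) (i : ℕ) (hi : i < k.1+1) :
    bw (insW v k ε) i = bw v i := by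
  have hk := k.2
  rw [bw_insW v k ε _ (by omega), if_neg (by omega), if_pos hi]

lemma bw_insW_gt (v : SignedPerm m) (k : Fin (m+1)) (ε : Bool) (i : ℕ)
    (h1 : k.1+1 < i) (h2 : i ≤ m+1) :
    bw (insW v k ε) i = bw v (i-1) := by
  rw [bw_insW v k ε _ h2, if_neg (by omega), if_neg (by omega)]

lemma bw_insW_sA (v : SignedPerm m) (k : Fin (m+1)) (ε : Bool) (j : Fin m) :
    bw (insW v k ε) ((k.succAbove j).1 + 1) = bw v (j.1+1) := by
  have hk := k.2; have hj := j.2; have hs := sA_val k j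
  rcases lt_or_ge (j.1 : ℕ) k.1 with h | h
  · rw [if_pos h] at hs
    rw [hs, bw_insW_lt v k ε _ (by omega)]
  · rw [if_neg (not_lt.2 h)] at hs
    rw [hs, bw_insW_gt v k ε _ (by omega) (by omega)]
    norm_num

lemma count_lt_val (c : ℕ) (hc : c ≤ m) :
    (Finset.univ.filter (fun j : Fin m => j.1 < c)).card = c := by
  rw [Finset.card_filter, Fin.sum_univ_eq_sum_range (fun i => if i < c then 1 else 0) m,
    ← Finset.card_filter]
  have h : (Finset.range m).filter (fun i => i < c) = Finset.range c := by
    ext x; simp only [Finset.mem_filter, Finset.mem_range]; omega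
  rw [h, Finset.card_range]

lemma count_ge_val (c : ℕ) (hc : c ≤ m) :
    (Finset.univ.filter (fun j : Fin m => c ≤ j.1)).card = m - c := by
  have h1 : (Finset.univ.filter (fun j : Fin m => c ≤ j.1))
      = (Finset.univ.filter (fun j : Fin m => ¬ j.1 < c)) := by
    apply Finset.filter_congr; intro x _; simp [not_lt]
  have h2 := Finset.card_filter_add_card_filter_not
    (s := (Finset.univ : Finset (Fin m))) (p := fun j : Fin m => j.1 < c)
  rw [count_lt_val c hc, Finset.card_univ, Fintype.card_fin] at h2
  rw [h1]
  omega

lemma desB_eq_sum (w : SignedPerm m) :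
    desB w = ∑ i ∈ Finset.range m, (if bw w (i+1) < bw w i then 1 else 0) := by
  rw [desB, Finset.card_filter]

lemma desB_le (w : SignedPerm m) : desB w ≤ m := by
  calc desB w ≤ (Finset.range m).card := Finset.card_filter_le _ _
  _ = m := Finset.card_range m

lemma desB_insW (v : SignedPerm m) (k : Fin (m+1)) (ε : Bool) :
    desB (insW v k ε) =
      if (k.1 < m ∧ bw v (k.1+1) < bw v k.1) ∨ (k.1 = m ∧ ε = false)
      then desB v else desB v + 1 := by
  have hk := k.2
  have hb1 := bw_bounds v k.1
  have hb2 := bw_bounds v (k.1+1)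
  have hfK : bw (insW v k ε) (k.1+1) = nuv m ε := bw_insW_self v k ε
  have hfK0 : bw (insW v k ε) k.1 = bw v k.1 := bw_insW_lt v k ε _ (by omega)
  rw [desB_eq_sum, desB_eq_sum]
  rcases eq_or_lt_of_le (show k.1 ≤ m by omega) with hkm | hkm
  · -- k = m : inserting at the very end
    rw [hkm] at hfK hfK0 hb1 hb2
    rw [Finset.sum_range_succ]
    have h1 : ∀ i ∈ Finset.range m,
        (if bw (insW v k ε) (i+1) < bw (insW v k ε) i then 1 else 0)
        = (if bw v (i+1) < bw v i then (1:ℕ) else 0) := by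
      intro i hi
      rw [Finset.mem_range] at hi
      rw [bw_insW_lt v k ε (i+1) (by omega), bw_insW_lt v k ε i (by omega)]
    rw [Finset.sum_congr rfl h1, hfK, hfK0]
    cases ε with
    | false =>
      rw [if_neg (by simp only [nuv, Bool.false_eq_true, if_false]; omega),
        if_pos (Or.inr ⟨hkm, rfl⟩), add_zero]
    | true =>
      rw [if_pos (by simp only [nuv, if_true]; omega),
        if_neg (by rintro (⟨hh, _⟩ | ⟨_, hh⟩)
                   · omega
                   · exact absurd hh (by simp))]
  · -- k < m : inserting in the middle
    set K := k.1 with hKdef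
    clear_value K
    have hsplit1 : ∑ i ∈ Finset.range (m+1),
          (if bw (insW v k ε) (i+1) < bw (insW v k ε) i then (1:ℕ) else 0)
        = (∑ i ∈ Finset.range K, (if bw (insW v k ε) (i+1) < bw (insW v k ε) i then 1 else 0))
          + (((if bw (insW v k ε) (K+1) < bw (insW v k ε) K then 1 else 0)
              + (if bw (insW v k ε) (K+1+1) < bw (insW v k ε) (K+1) then 1 else 0))
            + ∑ i ∈ Finset.Ico (K+2) (m+1), (if bw (insW v k ε) (i+1) < bw (insW v k ε) i then 1 else 0)) := by
      rw [Finset.range_eq_Ico,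
        ← Finset.sum_Ico_consecutive _ (Nat.zero_le K) (show K ≤ m+1 by omega),
        ← Finset.sum_Ico_consecutive _ (show K ≤ K+2 by omega) (show K+2 ≤ m+1 by omega),
        Nat.Ico_zero_eq_range]
      congr 2
      rw [show K+2 = K+1+1 by omega, Finset.sum_Ico_succ_top (by omega),
        Finset.sum_Ico_succ_top (by omega), Finset.Ico_self, Finset.sum_empty, zero_add]
    have hsplit2 : ∑ i ∈ Finset.range m, (if bw v (i+1) < bw v i then (1:ℕ) else 0)
        = (∑ i ∈ Finset.range K, (if bw v (i+1) < bw v i then 1 else 0))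
          + ((if bw v (K+1) < bw v K then 1 else 0)
            + ∑ i ∈ Finset.Ico (K+1) m, (if bw v (i+1) < bw v i then 1 else 0)) := by
      rw [Finset.range_eq_Ico,
        ← Finset.sum_Ico_consecutive _ (Nat.zero_le K) (show K ≤ m by omega),
        Nat.Ico_zero_eq_range]
      congr 1
      rw [Finset.sum_eq_sum_Ico_succ_bot (show K < m by omega)]
    have hC : ∑ i ∈ Finset.range K, (if bw (insW v k ε) (i+1) < bw (insW v k ε) i then (1:ℕ) else 0)
        = ∑ i ∈ Finset.range K, (if bw v (i+1) < bw v i then 1 else 0) := by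
      apply Finset.sum_congr rfl
      intro i hi
      rw [Finset.mem_range] at hi
      rw [bw_insW_lt v k ε (i+1) (by omega), bw_insW_lt v k ε i (by omega)]
    have hupper : ∑ i ∈ Finset.Ico (K+2) (m+1), (if bw (insW v k ε) (i+1) < bw (insW v k ε) i then (1:ℕ) else 0)
        = ∑ i ∈ Finset.Ico (K+1) m, (if bw v (i+1) < bw v i then 1 else 0) := by
      rw [Finset.sum_Ico_eq_sum_range, Finset.sum_Ico_eq_sum_range,
        show m+1-(K+2) = m-(K+1) by omega]
      apply Finset.sum_congr rfl
      intro l hl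
      rw [Finset.mem_range] at hl
      rw [bw_insW_gt v k ε (K+2+l+1) (by omega) (by omega),
        bw_insW_gt v k ε (K+2+l) (by omega) (by omega),
        show K+2+l+1-1 = K+1+l+1 by omega, show K+2+l-1 = K+1+l by omega]
    have hG1 : bw (insW v k ε) (K+1+1) = bw v (K+1) := by
      rw [bw_insW_gt v k ε (K+1+1) (by omega) (by omega), show K+1+1-1 = K+1 by omega]
    rw [hsplit1, hsplit2, hC, hupper, hG1, hfK, hfK0]
    cases ε with
    | false =>
      rw [show nuv m false = (m:ℤ)+1 from by simp [nuv]]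
      rw [if_neg (show ¬ ((m:ℤ)+1 < bw v K) by omega),
        if_pos (show bw v (K+1) < (m:ℤ)+1 by omega)]
      by_cases hdesc : bw v (K+1) < bw v K
      · rw [if_pos hdesc, if_pos (Or.inl ⟨hkm, hdesc⟩)]
        try omega
      · rw [if_neg hdesc, if_neg (by rintro (⟨_, hh⟩ | ⟨hh, _⟩) <;> omega)]
        try omega
    | true =>
      rw [show nuv m true = -((m:ℤ)+1) from by simp [nuv]]
      rw [if_pos (show -((m:ℤ)+1) < bw v K by omega),
        if_neg (show ¬ (bw v (K+1) < -((m:ℤ)+1)) by omega)]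
      by_cases hdesc : bw v (K+1) < bw v K
      · rw [if_pos hdesc, if_pos (Or.inl ⟨hkm, hdesc⟩)]
        try omega
      · rw [if_neg hdesc, if_neg (by rintro (⟨_, hh⟩ | ⟨hh, _⟩) <;> omega)]
        try omega


lemma invB_eq_sum (w : SignedPerm m) :
    invB w = (∑ p : Fin m × Fin m, if p.1 < p.2 ∧ bw w (p.2.1+1) < bw w (p.1.1+1) then 1 else 0)
      + (∑ p : Fin m × Fin m, if p.1 < p.2 ∧ bw w (p.2.1+1) < -(bw w (p.1.1+1)) then 1 else 0)
      + (∑ i : Fin m, if bw w (i.1+1) < 0 then 1 else 0) := by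
  rw [invB, Finset.card_filter, Finset.card_filter, Finset.card_filter]

lemma sA_lt_left (k : Fin (m+1)) (j : Fin m) : k.succAbove j < k ↔ j.1 < k.1 := by
  rw [Fin.lt_def, sA_val]
  split_ifs <;> omega

lemma sA_lt_right (k : Fin (m+1)) (j : Fin m) : k < k.succAbove j ↔ k.1 ≤ j.1 := by
  rw [Fin.lt_def, sA_val]
  split_ifs <;> omega

lemma sA_lt_sA (k : Fin (m+1)) (j1 j2 : Fin m) :
    k.succAbove j1 < k.succAbove j2 ↔ j1 < j2 := by
  rw [Fin.lt_def, Fin.lt_def, sA_val, sA_val]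
  split_ifs <;> omega

lemma split_pair_sum (k : Fin (m+1)) (F : Fin (m+1) → Fin (m+1) → ℕ) :
    ∑ p : Fin (m+1) × Fin (m+1), F p.1 p.2
      = F k k + (∑ j : Fin m, F k (k.succAbove j)) + (∑ j : Fin m, F (k.succAbove j) k)
        + ∑ j1 : Fin m, ∑ j2 : Fin m, F (k.succAbove j1) (k.succAbove j2) := by
  rw [Fintype.sum_prod_type]
  rw [Fin.sum_univ_succAbove (fun p1 => ∑ p2, F p1 p2) k]
  rw [Fin.sum_univ_succAbove (fun p2 => F k p2) k]
  have h : ∀ j1 ∈ (Finset.univ : Finset (Fin m)), ∑ p2, F (k.succAbove j1) p2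
      = F (k.succAbove j1) k + ∑ j2, F (k.succAbove j1) (k.succAbove j2) :=
    fun j1 _ => Fin.sum_univ_succAbove (fun p2 => F (k.succAbove j1) p2) k
  rw [Finset.sum_congr rfl h, Finset.sum_add_distrib]
  ring

lemma invB_insW (v : SignedPerm m) (k : Fin (m+1)) (ε : Bool) :
    invB (insW v k ε) = invB v + (if ε then m + k.1 + 1 else m - k.1) := by
  have hk := k.2
  rw [invB_eq_sum, invB_eq_sum]
  have h1 : ∑ p : Fin (m+1) × Fin (m+1),
        (if p.1 < p.2 ∧ bw (insW v k ε) (p.2.1+1) < bw (insW v k ε) (p.1.1+1) then (1:ℕ) else 0)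
      = (∑ p : Fin m × Fin m, if p.1 < p.2 ∧ bw v (p.2.1+1) < bw v (p.1.1+1) then 1 else 0)
        + (if ε then k.1 else m - k.1) := by
    rw [split_pair_sum k
      (fun a b => if a < b ∧ bw (insW v k ε) (b.1+1) < bw (insW v k ε) (a.1+1) then 1 else 0)]
    have e1 : (if k < k ∧ bw (insW v k ε) (k.1+1) < bw (insW v k ε) (k.1+1) then (1:ℕ) else 0) = 0 := by
      rw [if_neg]; rintro ⟨hh, _⟩; exact lt_irrefl _ hh
    have e2 : ∑ j : Fin m, (if k < k.succAbove j
          ∧ bw (insW v k ε) ((k.succAbove j).1+1) < bw (insW v k ε) (k.1+1) then (1:ℕ) else 0)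
        = if ε then 0 else m - k.1 := by
      cases ε with
      | false =>
        rw [if_neg Bool.false_ne_true]
        have hterm : ∀ j ∈ (Finset.univ : Finset (Fin m)), (if k < k.succAbove j
              ∧ bw (insW v k false) ((k.succAbove j).1+1) < bw (insW v k false) (k.1+1) then (1:ℕ) else 0)
            = if k.1 ≤ j.1 then 1 else 0 := by
          intro j _
          rw [bw_insW_sA, bw_insW_self]
          have hb := bw_bounds v (j.1+1)
          by_cases h : k.1 ≤ j.1
          · rw [if_pos ⟨(sA_lt_right k j).2 h, by simp only [nuv, Bool.false_eq_true, if_false]; omega⟩,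
              if_pos h]
          · rw [if_neg (fun hh => h ((sA_lt_right k j).1 hh.1)), if_neg h]
        rw [Finset.sum_congr rfl hterm, ← Finset.card_filter, count_ge_val k.1 (by omega)]
      | true =>
        rw [if_pos rfl]
        apply Finset.sum_eq_zero
        intro j _
        rw [bw_insW_sA, bw_insW_self]
        have hb := bw_bounds v (j.1+1)
        rw [if_neg]
        rintro ⟨_, hh⟩
        simp [nuv] at hh
        omega
    have e3 : ∑ j : Fin m, (if k.succAbove j < k
          ∧ bw (insW v k ε) (k.1+1) < bw (insW v k ε) ((k.succAbove j).1+1) then (1:ℕ) else 0)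
        = if ε then k.1 else 0 := by
      cases ε with
      | false =>
        rw [if_neg Bool.false_ne_true]
        apply Finset.sum_eq_zero
        intro j _
        rw [bw_insW_sA, bw_insW_self]
        have hb := bw_bounds v (j.1+1)
        rw [if_neg]
        rintro ⟨_, hh⟩
        simp only [nuv, Bool.false_eq_true, if_false] at hh
        omega
      | true =>
        rw [if_pos rfl]
        have hterm : ∀ j ∈ (Finset.univ : Finset (Fin m)), (if k.succAbove j < k
              ∧ bw (insW v k true) (k.1+1) < bw (insW v k true) ((k.succAbove j).1+1) then (1:ℕ) else 0)
            = if j.1 < k.1 then 1 else 0 := by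
          intro j _
          rw [bw_insW_sA, bw_insW_self]
          have hb := bw_bounds v (j.1+1)
          by_cases h : j.1 < k.1
          · rw [if_pos ⟨(sA_lt_left k j).2 h, by simp [nuv]; omega⟩, if_pos h]
          · rw [if_neg (fun hh => h ((sA_lt_left k j).1 hh.1)), if_neg h]
        rw [Finset.sum_congr rfl hterm, ← Finset.card_filter, count_lt_val k.1 (by omega)]
    have e4 : ∑ j1 : Fin m, ∑ j2 : Fin m, (if k.succAbove j1 < k.succAbove j2
          ∧ bw (insW v k ε) ((k.succAbove j2).1+1) < bw (insW v k ε) ((k.succAbove j1).1+1) then (1:ℕ) else 0)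
        = ∑ p : Fin m × Fin m, if p.1 < p.2 ∧ bw v (p.2.1+1) < bw v (p.1.1+1) then 1 else 0 := by
      rw [Fintype.sum_prod_type]
      apply Finset.sum_congr rfl
      intro j1 _
      apply Finset.sum_congr rfl
      intro j2 _
      rw [bw_insW_sA, bw_insW_sA]
      exact if_congr (and_congr (sA_lt_sA k j1 j2) Iff.rfl) rfl rfl
    rw [e1, e2, e3, e4]
    cases ε <;> simp <;> omega
  have h2 : ∑ p : Fin (m+1) × Fin (m+1),
        (if p.1 < p.2 ∧ bw (insW v k ε) (p.2.1+1) < -(bw (insW v k ε) (p.1.1+1)) then (1:ℕ) else 0)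
      = (∑ p : Fin m × Fin m, if p.1 < p.2 ∧ bw v (p.2.1+1) < -(bw v (p.1.1+1)) then 1 else 0)
        + (if ε then (m - k.1) + k.1 else 0) := by
    rw [split_pair_sum k
      (fun a b => if a < b ∧ bw (insW v k ε) (b.1+1) < -(bw (insW v k ε) (a.1+1)) then 1 else 0)]
    have e1 : (if k < k ∧ bw (insW v k ε) (k.1+1) < -(bw (insW v k ε) (k.1+1)) then (1:ℕ) else 0) = 0 := by
      rw [if_neg]; rintro ⟨hh, _⟩; exact lt_irrefl _ hh
    have e2 : ∑ j : Fin m, (if k < k.succAbove j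
          ∧ bw (insW v k ε) ((k.succAbove j).1+1) < -(bw (insW v k ε) (k.1+1)) then (1:ℕ) else 0)
        = if ε then m - k.1 else 0 := by
      cases ε with
      | false =>
        rw [if_neg Bool.false_ne_true]
        apply Finset.sum_eq_zero
        intro j _
        rw [bw_insW_sA, bw_insW_self]
        have hb := bw_bounds v (j.1+1)
        rw [if_neg]
        rintro ⟨_, hh⟩
        simp only [nuv, Bool.false_eq_true, if_false] at hh
        omega
      | true =>
        rw [if_pos rfl]
        have hterm : ∀ j ∈ (Finset.univ : Finset (Fin m)), (if k < k.succAbove j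
              ∧ bw (insW v k true) ((k.succAbove j).1+1) < -(bw (insW v k true) (k.1+1)) then (1:ℕ) else 0)
            = if k.1 ≤ j.1 then 1 else 0 := by
          intro j _
          rw [bw_insW_sA, bw_insW_self]
          have hb := bw_bounds v (j.1+1)
          by_cases h : k.1 ≤ j.1
          · rw [if_pos ⟨(sA_lt_right k j).2 h, by simp [nuv]; omega⟩, if_pos h]
          · rw [if_neg (fun hh => h ((sA_lt_right k j).1 hh.1)), if_neg h]
        rw [Finset.sum_congr rfl hterm, ← Finset.card_filter, count_ge_val k.1 (by omega)]
    have e3 : ∑ j : Fin m, (if k.succAbove j < k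
          ∧ bw (insW v k ε) (k.1+1) < -(bw (insW v k ε) ((k.succAbove j).1+1)) then (1:ℕ) else 0)
        = if ε then k.1 else 0 := by
      cases ε with
      | false =>
        rw [if_neg Bool.false_ne_true]
        apply Finset.sum_eq_zero
        intro j _
        rw [bw_insW_sA, bw_insW_self]
        have hb := bw_bounds v (j.1+1)
        rw [if_neg]
        rintro ⟨_, hh⟩
        simp only [nuv, Bool.false_eq_true, if_false] at hh
        omega
      | true =>
        rw [if_pos rfl]
        have hterm : ∀ j ∈ (Finset.univ : Finset (Fin m)), (if k.succAbove j < k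
              ∧ bw (insW v k true) (k.1+1) < -(bw (insW v k true) ((k.succAbove j).1+1)) then (1:ℕ) else 0)
            = if j.1 < k.1 then 1 else 0 := by
          intro j _
          rw [bw_insW_sA, bw_insW_self]
          have hb := bw_bounds v (j.1+1)
          by_cases h : j.1 < k.1
          · rw [if_pos ⟨(sA_lt_left k j).2 h, by simp [nuv]; omega⟩, if_pos h]
          · rw [if_neg (fun hh => h ((sA_lt_left k j).1 hh.1)), if_neg h]
        rw [Finset.sum_congr rfl hterm, ← Finset.card_filter, count_lt_val k.1 (by omega)]
    have e4 : ∑ j1 : Fin m, ∑ j2 : Fin m, (if k.succAbove j1 < k.succAbove j2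
          ∧ bw (insW v k ε) ((k.succAbove j2).1+1) < -(bw (insW v k ε) ((k.succAbove j1).1+1)) then (1:ℕ) else 0)
        = ∑ p : Fin m × Fin m, if p.1 < p.2 ∧ bw v (p.2.1+1) < -(bw v (p.1.1+1)) then 1 else 0 := by
      rw [Fintype.sum_prod_type]
      apply Finset.sum_congr rfl
      intro j1 _
      apply Finset.sum_congr rfl
      intro j2 _
      rw [bw_insW_sA, bw_insW_sA]
      exact if_congr (and_congr (sA_lt_sA k j1 j2) Iff.rfl) rfl rfl
    rw [e1, e2, e3, e4]
    cases ε <;> simp <;> omega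
  have h3 : ∑ i : Fin (m+1), (if bw (insW v k ε) (i.1+1) < 0 then (1:ℕ) else 0)
      = (∑ i : Fin m, if bw v (i.1+1) < 0 then 1 else 0) + (if ε then 1 else 0) := by
    rw [Fin.sum_univ_succAbove (fun i => if bw (insW v k ε) (i.1+1) < 0 then (1:ℕ) else 0) k]
    have hterm : ∀ j ∈ (Finset.univ : Finset (Fin m)),
        (if bw (insW v k ε) ((k.succAbove j).1+1) < 0 then (1:ℕ) else 0)
        = if bw v (j.1+1) < 0 then 1 else 0 := by
      intro j _
      rw [bw_insW_sA]
    rw [Finset.sum_congr rfl hterm, bw_insW_self]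
    cases ε with
    | false =>
      rw [if_neg (by simp [nuv]; omega), if_neg Bool.false_ne_true, zero_add, add_zero]
    | true =>
      rw [if_pos (by simp [nuv]; omega), if_pos rfl, add_comm]
  rw [h1, h2, h3]
  cases ε with
  | false => simp only [Bool.false_eq_true, if_false]; omega
  | true => simp only [if_true]; omega

lemma insF_self (v : Equiv.Perm (Fin m)) (k : Fin (m+1)) : insF v k k = Fin.last m := by
  rw [insF, dif_pos rfl]

lemma insF_sA (v : Equiv.Perm (Fin m)) (k : Fin (m+1)) (j : Fin m) :
    insF v k (k.succAbove j) = (v j).castSucc := by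
  have hs := sA_val k j; have hk := k.2; have hj := j.2
  rcases lt_or_ge (j.1 : ℕ) k.1 with h | h
  · rw [if_pos h] at hs
    rw [insF, dif_neg (by omega), dif_pos (by omega : (k.succAbove j).1 < k.1)]
    have hidx : (⟨(k.succAbove j).1, by omega⟩ : Fin m) = j := Fin.ext (by simpa using hs)
    rw [hidx]
  · rw [if_neg (not_lt.2 h)] at hs
    rw [insF, dif_neg (by omega), dif_neg (by omega : ¬ (k.succAbove j).1 < k.1)]
    have hidx : (⟨(k.succAbove j).1 - 1, by omega⟩ : Fin m) = j := Fin.ext (by simp [hs])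
    rw [hidx]

lemma insS_sA (c : Fin m → Bool) (k : Fin (m+1)) (ε : Bool) (j : Fin m) :
    insS c k ε (k.succAbove j) = c j := by
  have hs := sA_val k j; have hk := k.2; have hj := j.2
  rcases lt_or_ge (j.1 : ℕ) k.1 with h | h
  · rw [if_pos h] at hs
    rw [insS, dif_neg (by omega), dif_pos (by omega : (k.succAbove j).1 < k.1)]
    have hidx : (⟨(k.succAbove j).1, by omega⟩ : Fin m) = j := Fin.ext (by simpa using hs)
    rw [hidx]
  · rw [if_neg (not_lt.2 h)] at hs
    rw [insS, dif_neg (by omega), dif_neg (by omega : ¬ (k.succAbove j).1 < k.1)]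
    have hidx : (⟨(k.succAbove j).1 - 1, by omega⟩ : Fin m) = j := Fin.ext (by simp [hs])
    rw [hidx]

lemma insW_injective :
    Function.Injective (fun x : SignedPerm m × Fin (m+1) × Bool => insW x.1 x.2.1 x.2.2) := by
  rintro ⟨v, k, ε⟩ ⟨v', k', ε'⟩ h
  simp only at h
  have hP : insP v.1 k = insP v'.1 k' := congrArg Prod.fst h
  have hS : insS v.2 k ε = insS v'.2 k' ε' := congrArg Prod.snd h
  have hF : ∀ x, insF v.1 k x = insF v'.1 k' x :=
    fun x => congrArg (fun (e : Equiv.Perm (Fin (m+1))) => e x) hP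
  have hkk : k = k' := by
    have h1 := hF k
    rw [insF_self, insF] at h1
    split_ifs at h1 with hc1 hc2
    · exact Fin.ext hc1
    · exact absurd h1.symm (Fin.ne_of_lt (Fin.castSucc_lt_last _))
    · exact absurd h1.symm (Fin.ne_of_lt (Fin.castSucc_lt_last _))
  subst hkk
  have hε : ε = ε' := by
    have h2 := congrFun hS k
    simpa [insS] using h2
  subst hε
  have hv1 : v.1 = v'.1 := by
    apply Equiv.ext; intro j
    have h1 := hF (k.succAbove j)
    rw [insF_sA, insF_sA] at h1
    exact Fin.castSucc_inj.mp h1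
  have hv2 : v.2 = v'.2 := by
    funext j
    have h1 := congrFun hS (k.succAbove j)
    rw [insS_sA, insS_sA] at h1
    exact h1
  rw [show v = v' from Prod.ext hv1 hv2]

lemma insW_bijective :
    Function.Bijective (fun x : SignedPerm m × Fin (m+1) × Bool => insW x.1 x.2.1 x.2.2) := by
  rw [Fintype.bijective_iff_injective_and_card]
  refine ⟨insW_injective, ?_⟩
  simp only [Fintype.card_prod, Fintype.card_perm, Fintype.card_fun, Fintype.card_fin,
    Fintype.card_bool, Nat.factorial_succ]
  ring

lemma sum_insW {M : Type*} [AddCommMonoid M] (G : SignedPerm (m+1) → M) :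
    ∑ w : SignedPerm (m+1), G w
      = ∑ v : SignedPerm m, ∑ k : Fin (m+1), ∑ ε : Bool, G (insW v k ε) := by
  rw [← (Fintype.sum_bijective _ insW_bijective _ G (fun x => rfl) :
    ∑ x : SignedPerm m × Fin (m+1) × Bool, G (insW x.1 x.2.1 x.2.2) = _)]
  rw [Fintype.sum_prod_type]
  apply Finset.sum_congr rfl
  intro v _
  rw [Fintype.sum_prod_type]

lemma dop_mono (d e : ℕ) :
    (X 0 : MvPolynomial (Fin 2) ℚ) * X 1 * Dop (X 1 ^ d * X 0 ^ e)
      = (e : ℕ) • ((X 1 : MvPolynomial (Fin 2) ℚ) ^ (d+1) * X 0 ^ e)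
        + (d : ℕ) • ((X 1 : MvPolynomial (Fin 2) ℚ) ^ d * X 0 ^ (e+1)) := by
  rw [Dop, pderiv_mul, pderiv_mul, pderiv_pow, pderiv_pow, pderiv_pow, pderiv_pow,
    pderiv_X_self, pderiv_X_self, pderiv_X_of_ne (by decide), pderiv_X_of_ne (by decide)]
  rcases Nat.eq_zero_or_pos d with rfl | hd <;> rcases Nat.eq_zero_or_pos e with rfl | he
  · simp
  · obtain ⟨e', rfl⟩ := Nat.exists_eq_succ_of_ne_zero he.ne'
    simp [pow_succ]; ring
  · obtain ⟨d', rfl⟩ := Nat.exists_eq_succ_of_ne_zero hd.ne'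
    simp [pow_succ]; ring
  · obtain ⟨e', rfl⟩ := Nat.exists_eq_succ_of_ne_zero he.ne'
    obtain ⟨d', rfl⟩ := Nat.exists_eq_succ_of_ne_zero hd.ne'
    simp [pow_succ]; ring

lemma perV (pa : Bool) (v : SignedPerm m) :
    (∑ k : Fin (m+1), ∑ ε : Bool,
      (if (Even (invB (insW v k ε)) ↔ pa = true)
       then (X 1 : MvPolynomial (Fin 2) ℚ) ^ desB (insW v k ε) * X 0 ^ (m+1 - desB (insW v k ε))
       else 0))
    = X 0 * (if (Even (invB v) ↔ pa = true)
          then (X 1 : MvPolynomial (Fin 2) ℚ) ^ desB v * X 0 ^ (m - desB v) else 0)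
      + X 1 * (if ¬ (Even (invB v) ↔ pa = true)
          then (X 1 : MvPolynomial (Fin 2) ℚ) ^ desB v * X 0 ^ (m - desB v) else 0)
      + X 0 * X 1 * Dop ((X 1 : MvPolynomial (Fin 2) ℚ) ^ desB v * X 0 ^ (m - desB v)) := by
  have hdm : desB v ≤ m := desB_le v
  set d := desB v with hd
  set M0 : MvPolynomial (Fin 2) ℚ := X 1 ^ d * X 0 ^ (m+1-d) with hM0
  set M1 : MvPolynomial (Fin 2) ℚ := X 1 ^ (d+1) * X 0 ^ (m-d) with hM1
  have hterm : ∀ (k : Fin (m+1)) (ε : Bool),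
      (if (Even (invB (insW v k ε)) ↔ pa = true)
       then (X 1 : MvPolynomial (Fin 2) ℚ) ^ desB (insW v k ε) * X 0 ^ (m+1 - desB (insW v k ε))
       else 0)
      = (if (Even (invB v + (if ε then m + k.1 + 1 else m - k.1)) ↔ pa = true)
         then (if (k.1 < m ∧ bw v (k.1+1) < bw v k.1) ∨ (k.1 = m ∧ ε = false) then M0 else M1)
         else 0) := by
    intro k ε
    rw [invB_insW, desB_insW]
    by_cases hC : (k.1 < m ∧ bw v (k.1+1) < bw v k.1) ∨ (k.1 = m ∧ ε = false)
    · rw [if_pos hC, if_pos hC]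
    · rw [if_neg hC, if_neg hC, show m+1-(d+1) = m - d from by omega]
  rw [Finset.sum_congr rfl (fun k _ => Finset.sum_congr rfl (fun ε _ => hterm k ε))]
  rw [Fin.sum_univ_castSucc (f := fun k : Fin (m+1) =>
    ∑ ε : Bool, (if (Even (invB v + (if ε then m + k.1 + 1 else m - k.1)) ↔ pa = true)
      then (if (k.1 < m ∧ bw v (k.1+1) < bw v k.1) ∨ (k.1 = m ∧ ε = false) then M0 else M1)
      else 0))]
  have hmid : ∀ k : Fin m,
      (∑ ε : Bool, (if (Even (invB v + (if ε then m + (Fin.castSucc k).1 + 1 else m - (Fin.castSucc k).1)) ↔ pa = true)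
        then (if ((Fin.castSucc k).1 < m ∧ bw v ((Fin.castSucc k).1+1) < bw v (Fin.castSucc k).1)
            ∨ ((Fin.castSucc k).1 = m ∧ ε = false) then M0 else M1)
        else 0))
      = if bw v (k.1+1) < bw v k.1 then M0 else M1 := by
    intro k
    have hk := k.2
    have hkne : k.1 ≠ m := by omega
    rw [Fintype.sum_bool]
    have hpar : Even (invB v + (m + k.1 + 1)) ↔ ¬ Even (invB v + (m - k.1)) := by
      rw [Nat.even_iff, Nat.even_iff]
      omega
    by_cases hdesc : bw v (k.1+1) < bw v k.1 <;>
      by_cases hp : Even (invB v + (m - k.1)) <;>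
        cases pa <;>
          simp_all [Fin.coe_castSucc]
  rw [Finset.sum_congr rfl (fun k _ => hmid k)]
  have hcard : (Finset.univ.filter (fun k : Fin m => bw v (k.1+1) < bw v k.1)).card = d := by
    rw [hd, desB, Finset.card_filter, Finset.card_filter,
      Fin.sum_univ_eq_sum_range (fun i => if bw v (i+1) < bw v i then 1 else 0) m]
  have hcard2 : (Finset.univ.filter (fun k : Fin m => ¬ (bw v (k.1+1) < bw v k.1))).card = m - d := by
    have h2 := Finset.card_filter_add_card_filter_not
      (s := (Finset.univ : Finset (Fin m))) (p := fun k : Fin m => bw v (k.1+1) < bw v k.1)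
    rw [hcard, Finset.card_univ, Fintype.card_fin] at h2
    omega
  have hcount : (∑ k : Fin m, if bw v (k.1+1) < bw v k.1 then M0 else M1)
      = d • M0 + (m-d) • M1 := by
    rw [Finset.sum_ite, Finset.sum_const, Finset.sum_const, hcard, hcard2]
  rw [hcount]
  -- the k = last term
  have hlast : (∑ ε : Bool, (if (Even (invB v + (if ε then m + (Fin.last m).1 + 1 else m - (Fin.last m).1)) ↔ pa = true)
        then (if ((Fin.last m).1 < m ∧ bw v ((Fin.last m).1+1) < bw v (Fin.last m).1)
            ∨ ((Fin.last m).1 = m ∧ ε = false) then M0 else M1)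
        else 0))
      = (if (Even (invB v) ↔ pa = true) then M0 else 0)
        + (if ¬ (Even (invB v) ↔ pa = true) then M1 else 0) := by
    rw [Fintype.sum_bool]
    have hpar : Even (invB v + (m + m + 1)) ↔ ¬ Even (invB v) := by
      rw [Nat.even_iff, Nat.even_iff]
      omega
    clear hmid hcount hcard hcard2 hterm hM0 hM1 hd
    by_cases hp : Even (invB v) <;>
      cases pa <;>
        simp_all [Fin.val_last, lt_irrefl] <;>
          abel
  rw [hlast]
  -- right hand side
  rw [dop_mono d (m-d), show m-d+1 = m+1-d from by omega]
  have hxM0 : (X 0 : MvPolynomial (Fin 2) ℚ) * (X 1 ^ d * X 0 ^ (m - d)) = M0 := by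
    rw [hM0, show m+1-d = (m-d)+1 from by omega]
    ring
  have hxM1 : (X 1 : MvPolynomial (Fin 2) ℚ) * (X 1 ^ d * X 0 ^ (m - d)) = M1 := by
    rw [hM1]
    ring
  by_cases hp : (Even (invB v) ↔ pa = true)
  · rw [if_pos hp, if_pos hp, if_neg (not_not_intro hp), if_neg (not_not_intro hp), hxM0]
    simp only [mul_zero, add_zero, zero_add]
    abel
  · rw [if_neg hp, if_neg hp, if_pos hp, if_pos hp, hxM1]
    simp only [mul_zero, add_zero, zero_add]
    abel

lemma masterB (m : ℕ) (pa : Bool) :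
    (∑ w ∈ Finset.univ.filter (fun w : SignedPerm (m+1) => (Even (invB w) ↔ pa = true)),
      (X 1 : MvPolynomial (Fin 2) ℚ) ^ desB w * X 0 ^ (m+1 - desB w))
    = X 0 * (∑ v ∈ Finset.univ.filter (fun v : SignedPerm m => (Even (invB v) ↔ pa = true)),
        (X 1 : MvPolynomial (Fin 2) ℚ) ^ desB v * X 0 ^ (m - desB v))
      + X 1 * (∑ v ∈ Finset.univ.filter (fun v : SignedPerm m => ¬ (Even (invB v) ↔ pa = true)),
        (X 1 : MvPolynomial (Fin 2) ℚ) ^ desB v * X 0 ^ (m - desB v))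
      + X 0 * X 1 * Dop (Bbiv m) := by
  rw [Finset.sum_filter, Finset.sum_filter, Finset.sum_filter, Bbiv]
  have hDop : Dop (∑ w : SignedPerm m, (X 1 : MvPolynomial (Fin 2) ℚ) ^ desB w * X 0 ^ (m - desB w))
      = ∑ w : SignedPerm m, Dop ((X 1 : MvPolynomial (Fin 2) ℚ) ^ desB w * X 0 ^ (m - desB w)) := by
    unfold Dop
    rw [map_sum, map_sum, ← Finset.sum_add_distrib]
  rw [hDop, Finset.mul_sum, Finset.mul_sum, Finset.mul_sum,
    ← Finset.sum_add_distrib, ← Finset.sum_add_distrib]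
  rw [sum_insW (fun w : SignedPerm (m+1) => if (Even (invB w) ↔ pa = true)
    then (X 1 : MvPolynomial (Fin 2) ℚ) ^ desB w * X 0 ^ (m+1 - desB w) else 0)]
  apply Finset.sum_congr rfl
  intro v _
  exact perV pa v

end InsertionAux

theorem typeB_plus_minus_recurrence (n : ℕ) (hn : 2 ≤ n) :
    BbivP n = MvPolynomial.X 0 * BbivP (n-1) + MvPolynomial.X 1 * BbivM (n-1)
      + MvPolynomial.X 0 * MvPolynomial.X 1 * Dop (Bbiv (n-1)) ∧
    BbivM n = MvPolynomial.X 0 * BbivM (n-1) + MvPolynomial.X 1 * BbivP (n-1)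
      + MvPolynomial.X 0 * MvPolynomial.X 1 * Dop (Bbiv (n-1)) := by
  obtain ⟨m, rfl⟩ : ∃ m, n = m + 1 := ⟨n - 1, by omega⟩
  have hPt : ∀ N : ℕ, BbivP N = ∑ w ∈ Finset.univ.filter
      (fun w : SignedPerm N => (Even (invB w) ↔ (true : Bool) = true)),
      (MvPolynomial.X 1 : MvPolynomial (Fin 2) ℚ) ^ desB w * MvPolynomial.X 0 ^ (N - desB w) := by
    intro N
    rw [BbivP]
    apply Finset.sum_congr
    · apply Finset.filter_congr
      intro w _
      simp
    · intro w _
      rfl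
  have hMt : ∀ N : ℕ, BbivM N = ∑ w ∈ Finset.univ.filter
      (fun w : SignedPerm N => ¬ (Even (invB w) ↔ (true : Bool) = true)),
      (MvPolynomial.X 1 : MvPolynomial (Fin 2) ℚ) ^ desB w * MvPolynomial.X 0 ^ (N - desB w) := by
    intro N
    rw [BbivM]
    apply Finset.sum_congr
    · apply Finset.filter_congr
      intro w _
      simp
    · intro w _
      rfl
  have hMf : ∀ N : ℕ, BbivM N = ∑ w ∈ Finset.univ.filter
      (fun w : SignedPerm N => (Even (invB w) ↔ (false : Bool) = true)),
      (MvPolynomial.X 1 : MvPolynomial (Fin 2) ℚ) ^ desB w * MvPolynomial.X 0 ^ (N - desB w) := by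
    intro N
    rw [BbivM]
    apply Finset.sum_congr
    · apply Finset.filter_congr
      intro w _
      simp
    · intro w _
      rfl
  have hPf : ∀ N : ℕ, BbivP N = ∑ w ∈ Finset.univ.filter
      (fun w : SignedPerm N => ¬ (Even (invB w) ↔ (false : Bool) = true)),
      (MvPolynomial.X 1 : MvPolynomial (Fin 2) ℚ) ^ desB w * MvPolynomial.X 0 ^ (N - desB w) := by
    intro N
    rw [BbivP]
    apply Finset.sum_congr
    · apply Finset.filter_congr
      intro w _
      simp
    · intro w _
      rfl
  constructor
  · simp only [Nat.add_sub_cancel]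
    rw [hPt (m+1), hPt m, hMt m]
    exact masterB m true
  · simp only [Nat.add_sub_cancel]
    rw [hMf (m+1), hMf m, hPf m]
    exact masterB m false
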